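/- Let (A,σ) be a well-mixed difference domain (integral domain with endomorphism σ, satisfying ab = 0 ⟹ σ(a)b = 0 trivially) with fraction field K, and let C be the integral closure of A in K, which is a difference subring of K. Suppose the inclusion φ: A ↪ C has the property that the localization A_𝔭 is integrally closed (normal) for every σ-prime ideal 𝔭 maximal among σ-primes. Then, granting the principle that a difference module homomorphism whose localizations at all maximal σ-primes are surjective is 'almost surjective' (the well-mixed closure of its image is everything), the well-mixed closure [A]_w of A inside C equals C. -/

import Mathlib

set_option synthInstance.maxHeartbeats 1000000
set_option maxHeartbeats 1000000

private lemma stmt10_aux {A : Type*} [CommRing A] [IsDomain A]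
    (𝔭 : Ideal A) (h𝔭 : 𝔭.IsPrime)
    (hIC : IsIntegrallyClosed (Localization (@Ideal.primeCompl A _ 𝔭 h𝔭)))
    (c : ↥(integralClosure A (FractionRing A))) :
    ∃ (a : A) (u : 𝔭.primeCompl),
      u • c = algebraMap A ↥(integralClosure A (FractionRing A)) a := by
  haveI := h𝔭
  set K := FractionRing A
  set L := Localization 𝔭.primeCompl
  have hci : IsIntegral A (c : K) := c.2
  have hciL : IsIntegral L (c : K) := hci.tower_top
  obtain ⟨y, hy⟩ := IsIntegrallyClosed.isIntegral_iff.mp hciL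
  obtain ⟨⟨a, u⟩, rfl⟩ := IsLocalization.mk'_surjective 𝔭.primeCompl y
  refine ⟨a, u, ?_⟩
  have h1 := congrArg (algebraMap L K) (IsLocalization.mk'_spec L a u)
  rw [map_mul, hy, ← IsScalarTower.algebraMap_apply, ← IsScalarTower.algebraMap_apply] at h1
  apply Subtype.ext
  push_cast
  rw [Submonoid.smul_def, Algebra.smul_def, mul_comm]
  exact h1

theorem stmt10 {A : Type*} [CommRing A] [IsDomain A] (σ : A →+* A)
    (σK : FractionRing A →+* FractionRing A)
    (hσK : ∀ a : A, σK (algebraMap A (FractionRing A) a)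
      = algebraMap A (FractionRing A) (σ a))
    (hσC : ∀ x ∈ integralClosure A (FractionRing A),
      σK x ∈ integralClosure A (FractionRing A))
    (hnormal : ∀ (𝔭 : Ideal A) (h𝔭 : 𝔭.IsPrime), Ideal.comap σ 𝔭 = 𝔭 →
      (∀ 𝔮 : Ideal A, 𝔮.IsPrime → Ideal.comap σ 𝔮 = 𝔮 → 𝔭 ≤ 𝔮 → 𝔮 = 𝔭) →
      IsIntegrallyClosed (Localization (@Ideal.primeCompl A _ 𝔭 h𝔭)))
    (hp : ∀ (P Q : Type _) (_ : AddCommGroup P) (_ : Module A P)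
        (_ : AddCommGroup Q) (_ : Module A Q)
        (σP : P →+ P) (σQ : Q →+ Q),
        (∀ (a : A) (p : P), σP (a • p) = σ a • σP p) →
        (∀ (a : A) (q : Q), σQ (a • q) = σ a • σQ q) →
        ∀ (φ : P →ₗ[A] Q), (∀ p : P, φ (σP p) = σQ (φ p)) →
        (∀ (𝔭 : Ideal A) (h𝔭 : 𝔭.IsPrime), Ideal.comap σ 𝔭 = 𝔭 →
          (∀ 𝔮 : Ideal A, 𝔮.IsPrime → Ideal.comap σ 𝔮 = 𝔮 → 𝔭 ≤ 𝔮 → 𝔮 = 𝔭) →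
          Function.Surjective
            (IsLocalizedModule.map (@Ideal.primeCompl A _ 𝔭 h𝔭)
              (LocalizedModule.mkLinearMap (@Ideal.primeCompl A _ 𝔭 h𝔭) P)
              (LocalizedModule.mkLinearMap (@Ideal.primeCompl A _ 𝔭 h𝔭) Q) φ)) →
        ∀ W : Submodule A Q, LinearMap.range φ ≤ W →
          (∀ q ∈ W, σQ q ∈ W) →
          (∀ (a : A) (q : Q), a • q ∈ W → σ a • q ∈ W) →
          W = ⊤) :
    ∀ W : Submodule A ↥(integralClosure A (FractionRing A)),
      (∀ a : A, algebraMap A ↥(integralClosure A (FractionRing A)) a ∈ W) →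
      (∀ c : ↥(integralClosure A (FractionRing A)),
        c ∈ W → (⟨σK ↑c, hσC ↑c c.2⟩ : ↥(integralClosure A (FractionRing A))) ∈ W) →
      (∀ (a : A) (c : ↥(integralClosure A (FractionRing A))),
        a • c ∈ W → σ a • c ∈ W) →
      W = ⊤ := by
  intro W hW1 hW2 hW3
  rw [Submodule.eq_top_iff']
  intro c
  by_contra hc
  -- The ideal 𝔞 = {a | a • c ∈ W}
  let 𝔞 : Ideal A :=
    { carrier := {a | a • c ∈ W}
      add_mem' := fun {a b} ha hb => by
        show (a + b) • c ∈ W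
        rw [add_smul]; exact W.add_mem ha hb
      zero_mem' := by show (0:A) • c ∈ W; rw [zero_smul]; exact W.zero_mem
      smul_mem' := fun r a ha => by
        show (r • a) • c ∈ W
        rw [smul_eq_mul, mul_smul]; exact W.smul_mem r ha }
  have h𝔞mem : ∀ a : A, a ∈ 𝔞 ↔ a • c ∈ W := fun a => Iff.rfl
  have h𝔞σ : ∀ a ∈ 𝔞, σ a ∈ 𝔞 := fun a ha => hW3 a c ha
  have h𝔞wm : ∀ a b : A, a * b ∈ 𝔞 → σ a * b ∈ 𝔞 := by
    intro a b h
    have h1 : a • (b • c) ∈ W := by rw [← mul_smul]; exact h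
    have h2 := hW3 a (b • c) h1
    rw [h𝔞mem, mul_smul]; exact h2
  -- iterate lemmas
  have hitmul : ∀ (n : ℕ) (a b : A), σ^[n] (a * b) = σ^[n] a * σ^[n] b := by
    intro n
    induction n with
    | zero => intro a b; simp
    | succ n ih => intro a b; rw [Function.iterate_succ_apply, Function.iterate_succ_apply,
        Function.iterate_succ_apply, map_mul, ih]
  have hitadd : ∀ (n : ℕ) (a b : A), σ^[n] (a + b) = σ^[n] a + σ^[n] b := by
    intro n
    induction n with
    | zero => intro a b; simp
    | succ n ih => intro a b; rw [Function.iterate_succ_apply, Function.iterate_succ_apply,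
        Function.iterate_succ_apply, map_add, ih]
  have hitone : ∀ n : ℕ, σ^[n] (1:A) = 1 := by
    intro n
    induction n with
    | zero => simp
    | succ n ih => rw [Function.iterate_succ_apply, map_one, ih]
  have h𝔞up : ∀ (n : ℕ) (a : A), σ^[n] a ∈ 𝔞 → σ^[n+1] a ∈ 𝔞 := by
    intro n a h
    rw [Function.iterate_succ_apply']
    exact h𝔞σ _ h
  have h𝔞le : ∀ (n m : ℕ), n ≤ m → ∀ a : A, σ^[n] a ∈ 𝔞 → σ^[m] a ∈ 𝔞 := by
    intro n m hnm a h
    induction hnm with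
    | refl => exact h
    | step _ ih => exact h𝔞up _ _ ih
  -- σ-closure of 𝔞
  let 𝔞' : Ideal A :=
    { carrier := {a | ∃ n, σ^[n] a ∈ 𝔞}
      add_mem' := by
        rintro a b ⟨n, ha⟩ ⟨m, hb⟩
        refine ⟨max n m, ?_⟩
        rw [hitadd]
        exact 𝔞.add_mem (h𝔞le n _ (le_max_left n m) _ ha) (h𝔞le m _ (le_max_right n m) _ hb)
      zero_mem' := ⟨0, 𝔞.zero_mem⟩
      smul_mem' := by
        rintro r a ⟨n, ha⟩
        refine ⟨n, ?_⟩
        rw [smul_eq_mul, hitmul]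
        exact Ideal.mul_mem_left _ _ ha }
  have h𝔞𝔞' : 𝔞 ≤ 𝔞' := fun a ha => ⟨0, ha⟩
  -- the collection of proper reflexive well-mixed ideals
  let Sgood : Set (Ideal A) :=
    {I | I ≠ ⊤ ∧ Ideal.comap σ I = I ∧ ∀ a b : A, a * b ∈ I → σ a * b ∈ I}
  have h𝔞'S : 𝔞' ∈ Sgood := by
    refine ⟨?_, ?_, ?_⟩
    · rw [Ideal.ne_top_iff_one]
      rintro ⟨n, h1⟩
      rw [hitone] at h1
      exact hc (by simpa using (h𝔞mem 1).mp h1)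
    · ext a
      constructor
      · rintro ⟨n, h⟩
        exact ⟨n + 1, by rwa [Function.iterate_succ_apply]⟩
      · rintro ⟨n, h⟩
        refine ⟨n, ?_⟩
        show σ^[n] (σ a) ∈ 𝔞
        rw [← Function.iterate_succ_apply]
        exact h𝔞up n a h
    · rintro a b ⟨n, h⟩
      refine ⟨n, ?_⟩
      rw [hitmul] at h
      have h2 := h𝔞wm _ _ h
      rw [← Function.iterate_succ_apply' σ n a] at h2
      rw [hitmul, ← Function.iterate_succ_apply σ n a]
      exact h2
  -- Zorn
  obtain ⟨𝔪, h𝔞'𝔪, h𝔪max⟩ := zorn_le_nonempty₀ Sgood (by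
    intro ch hch hchain y hy
    refine ⟨sSup ch, ⟨?_, ?_, ?_⟩, fun z hz => le_sSup hz⟩
    · rw [Ideal.ne_top_iff_one]
      intro h1
      obtain ⟨I, hI, h1I⟩ := (Submodule.mem_sSup_of_directed ⟨y, hy⟩ hchain.directedOn).mp h1
      exact (hch hI).1 ((Ideal.eq_top_iff_one I).mpr h1I)
    · ext a
      rw [Ideal.mem_comap, Submodule.mem_sSup_of_directed ⟨y, hy⟩ hchain.directedOn,
        Submodule.mem_sSup_of_directed ⟨y, hy⟩ hchain.directedOn]
      constructor
      · rintro ⟨I, hI, haI⟩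
        exact ⟨I, hI, by rw [← (hch hI).2.1]; exact haI⟩
      · rintro ⟨I, hI, haI⟩
        refine ⟨I, hI, ?_⟩
        rw [← (hch hI).2.1] at haI
        exact haI
    · intro a b hab
      obtain ⟨I, hI, habI⟩ :=
        (Submodule.mem_sSup_of_directed ⟨y, hy⟩ hchain.directedOn).mp hab
      exact (le_sSup hI) ((hch hI).2.2 a b habI)) 𝔞' h𝔞'S
  obtain ⟨h𝔪ne, h𝔪refl, h𝔪wm⟩ := h𝔪max.1
  -- reflexivity downwards along iterates
  have hdown : ∀ (n : ℕ) (z : A), σ^[n] z ∈ 𝔪 → z ∈ 𝔪 := by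
    intro n
    induction n with
    | zero => exact fun z h => h
    | succ n ih =>
      intro z h
      rw [Function.iterate_succ_apply'] at h
      have : σ^[n] z ∈ Ideal.comap σ 𝔪 := h
      rw [h𝔪refl] at this
      exact ih z this
  have hraise : ∀ (m : ℕ) (x r : A), σ^[m] x * r ∈ 𝔪 → σ^[m+1] x * r ∈ 𝔪 := by
    intro m x r h
    rw [Function.iterate_succ_apply']
    exact h𝔪wm _ _ h
  have hraise_le : ∀ (n m : ℕ), n ≤ m → ∀ x r : A, σ^[n] x * r ∈ 𝔪 → σ^[m] x * r ∈ 𝔪 := by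
    intro n m hnm x r h
    induction hnm with
    | refl => exact h
    | step _ ih => exact hraise _ _ _ ih
  -- 𝔪 is prime
  have h𝔪prime : 𝔪.IsPrime := by
    refine ⟨h𝔪ne, ?_⟩
    intro x y hxy
    by_cases hy : y ∈ 𝔪
    · right; exact hy
    · left
      let K : Ideal A :=
        { carrier := {r | ∃ m, σ^[m] x * r ∈ 𝔪}
          add_mem' := by
            rintro r s ⟨m, hr⟩ ⟨m', hs⟩
            refine ⟨max m m', ?_⟩
            rw [mul_add]
            exact 𝔪.add_mem (hraise_le m _ (le_max_left m m') _ _ hr)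
              (hraise_le m' _ (le_max_right m m') _ _ hs)
          zero_mem' := ⟨0, by rw [mul_zero]; exact 𝔪.zero_mem⟩
          smul_mem' := by
            rintro t r ⟨m, hr⟩
            refine ⟨m, ?_⟩
            rw [smul_eq_mul, show σ^[m] x * (t * r) = t * (σ^[m] x * r) by ring]
            exact Ideal.mul_mem_left _ _ hr }
      have hyK : y ∈ K := ⟨0, hxy⟩
      by_cases h1 : (1:A) ∈ K
      · obtain ⟨m, hm⟩ := h1
        rw [mul_one] at hm
        exact hdown m x hm
      · exfalso
        have hKS : K ∈ Sgood := by
          refine ⟨?_, ?_, ?_⟩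
          · rw [Ideal.ne_top_iff_one]; exact h1
          · ext r
            constructor
            · rintro ⟨m, h⟩
              have h2 := hraise m x (σ r) h
              rw [Function.iterate_succ_apply', ← map_mul] at h2
              have : σ^[m] x * r ∈ Ideal.comap σ 𝔪 := h2
              rw [h𝔪refl] at this
              exact ⟨m, this⟩
            · rintro ⟨m, h⟩
              refine ⟨m, ?_⟩
              rw [mul_comm] at h ⊢
              exact h𝔪wm _ _ h
          · rintro a b ⟨m, h⟩
            refine ⟨m, ?_⟩
            rw [show σ^[m] x * (a * b) = a * (σ^[m] x * b) by ring] at h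
            have := h𝔪wm _ _ h
            rw [show σ^[m] x * (σ a * b) = σ a * (σ^[m] x * b) by ring]
            exact this
        have h𝔪K : 𝔪 ≤ K := fun r hr => ⟨0, Ideal.mul_mem_left _ _ hr⟩
        exact hy (h𝔪max.2 hKS h𝔪K hyK)
  -- 𝔪 is maximal among σ-primes
  have hmaxσ : ∀ 𝔮 : Ideal A, 𝔮.IsPrime → Ideal.comap σ 𝔮 = 𝔮 → 𝔪 ≤ 𝔮 → 𝔮 = 𝔪 := by
    intro 𝔮 h𝔮 hσ𝔮 hle
    have h𝔮S : 𝔮 ∈ Sgood := by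
      refine ⟨h𝔮.ne_top, hσ𝔮, ?_⟩
      intro a b hab
      rcases h𝔮.mem_or_mem hab with ha | hb
      · rw [← hσ𝔮] at ha
        exact Ideal.mul_mem_right _ _ (Ideal.mem_comap.mp ha)
      · exact Ideal.mul_mem_left _ _ hb
    exact le_antisymm (h𝔪max.2 h𝔮S hle) hle
  -- conclude via normality
  have hIC := hnormal 𝔪 h𝔪prime h𝔪refl hmaxσ
  obtain ⟨a, u, hu⟩ := stmt10_aux 𝔪 h𝔪prime hIC c
  have hmem : (u : A) • c ∈ W := by
    rw [← Submonoid.smul_def, hu]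
    exact hW1 a
  have hu𝔪 : (u : A) ∈ 𝔪 := h𝔞'𝔪 ⟨0, hmem⟩
  exact u.2 hu𝔪
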